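/- arXiv:1802.03786 — 2 statements merged into one kernel-verified Lean document; each statement's English description precedes it below -/
import Mathlib

section
/- Let R be a ring with identity and let A_1, …, A_n be proper right ideals of R such that A_iA_j = A_jA_i for every i, j = 1, …, n and the family {A_1, …, A_n} is coindependent. Then the product A_1⋯A_n equals the intersection ⋂_{i=1}^n A_i. -/
open MulOpposite

universe u

/-- The product `A·B` of two right ideals of `R` (right ideals are `Rᵐᵒᵖ`-submodules of `R`):
the set of all finite sums of products `a * b` with `a ∈ A`, `b ∈ B`. -/
def rmul {R : Type u} [Ring R] (A B : Submodule Rᵐᵒᵖ R) : Submodule Rᵐᵒᵖ R :=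
  Submodule.span Rᵐᵒᵖ {x : R | ∃ a ∈ A, ∃ b ∈ B, x = a * b}

/-- The product `A₁⋯Aₙ` of a (possibly empty) list of right ideals. -/
def rprod {R : Type u} [Ring R] : List (Submodule Rᵐᵒᵖ R) → Submodule Rᵐᵒᵖ R
  | [] => ⊤
  | [A] => A
  | A :: l => rmul A (rprod l)

/-- A finite family of right ideals is coindependent if `Aᵢ + ⋂_{j ≠ i} Aⱼ = R` for every `i`. -/
def Coindep {R : Type u} [Ring R] {n : ℕ} (A : Fin n → Submodule Rᵐᵒᵖ R) : Prop :=
  ∀ i, A i ⊔ (⨅ j, ⨅ (_ : j ≠ i), A j) = ⊤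

/-- A module is uniserial if its submodules are linearly ordered by inclusion. -/
def IsUniserialMod (S : Type*) [Ring S] (M : Type*) [AddCommGroup M] [Module S M] : Prop :=
  ∀ N P : Submodule S M, N ≤ P ∨ P ≤ N

/-- A right ideal is a two-sided ideal if it is also closed under left multiplication. -/
def IsTwoSidedRid {R : Type u} [Ring R] (A : Submodule Rᵐᵒᵖ R) : Prop :=
  ∀ (r : R), ∀ x ∈ A, r * x ∈ A

/-- A serial factorization of a right ideal `A`: a factorization `A = A₁⋯Aₙ` into proper
right ideals that pairwise commute, form a coindependent family, and are such that every
quotient `R/Aᵢ` is a uniserial right `R`-module. -/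
def IsSerialFact {R : Type u} [Ring R] {n : ℕ} (A : Submodule Rᵐᵒᵖ R)
    (F : Fin n → Submodule Rᵐᵒᵖ R) : Prop :=
  (∀ i, F i ≠ ⊤) ∧ (∀ i j, rmul (F i) (F j) = rmul (F j) (F i)) ∧ Coindep F ∧
    (∀ i, IsUniserialMod Rᵐᵒᵖ (R ⧸ F i)) ∧ A = rprod (List.ofFn F)

/-- A right ideal has a serial factorization if it admits one of some length. -/
def HasSerialFact {R : Type u} [Ring R] (A : Submodule Rᵐᵒᵖ R) : Prop :=
  ∃ (n : ℕ) (F : Fin n → Submodule Rᵐᵒᵖ R), IsSerialFact A F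

/-- A right chain ring: its right ideals are linearly ordered by inclusion. -/
def IsRightChainRing (R : Type u) [Ring R] : Prop :=
  ∀ A B : Submodule Rᵐᵒᵖ R, A ≤ B ∨ B ≤ A

/-- A ring is right duo if every right ideal is a two-sided ideal. -/
def IsRightDuo (R : Type u) [Ring R] : Prop :=
  ∀ A : Submodule Rᵐᵒᵖ R, IsTwoSidedRid A

/-- The principal right ideal `rR`. -/
def rspan {R : Type u} [Ring R] (r : R) : Submodule Rᵐᵒᵖ R :=
  Submodule.span Rᵐᵒᵖ ({r} : Set R)

section AuxSection
variable {R : Type u} [Ring R]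

def pset (A B : Submodule Rᵐᵒᵖ R) : Set R := {x : R | ∃ a ∈ A, ∃ b ∈ B, x = a * b}

lemma closure_mul_right (A B : Submodule Rᵐᵒᵖ R) (r : R) {x : R}
    (hx : x ∈ AddSubmonoid.closure (pset A B)) :
    x * r ∈ AddSubmonoid.closure (pset A B) := by
  induction hx using AddSubmonoid.closure_induction with
  | mem y hy =>
    obtain ⟨a, ha, b, hb, rfl⟩ := hy
    exact AddSubmonoid.subset_closure ⟨a, ha, b * r, B.smul_mem (op r) hb, mul_assoc a b r⟩
  | zero => simpa using zero_mem _
  | add y z _ _ hy hz => rw [add_mul]; exact add_mem hy hz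

lemma mem_rmul_iff {A B : Submodule Rᵐᵒᵖ R} {x : R} :
    x ∈ rmul A B ↔ x ∈ AddSubmonoid.closure (pset A B) := by
  constructor
  · intro hx
    induction hx using Submodule.span_induction with
    | mem y hy => exact AddSubmonoid.subset_closure hy
    | zero => exact zero_mem _
    | add y z _ _ hy hz => exact add_mem hy hz
    | smul r y _ hy => exact closure_mul_right A B r.unop hy
  · intro hx
    induction hx using AddSubmonoid.closure_induction with
    | mem y hy => exact Submodule.subset_span hy
    | zero => simpa using zero_mem (rmul A B)
    | add y z _ _ hy hz => exact add_mem hy hz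

lemma rmul_le_left {A B : Submodule Rᵐᵒᵖ R} : rmul A B ≤ A := by
  rw [rmul, Submodule.span_le]
  rintro x ⟨a, ha, b, hb, rfl⟩
  exact A.smul_mem (op b) ha

lemma rmul_top (A : Submodule Rᵐᵒᵖ R) : rmul A ⊤ = A := by
  refine le_antisymm rmul_le_left fun a ha => ?_
  exact Submodule.subset_span ⟨a, ha, 1, trivial, (mul_one a).symm⟩

lemma rmul_assoc (A B C : Submodule Rᵐᵒᵖ R) : rmul (rmul A B) C = rmul A (rmul B C) := by
  apply le_antisymm
  · rw [rmul, Submodule.span_le]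
    rintro x ⟨p, hp, c, hc, rfl⟩
    rw [mem_rmul_iff] at hp
    induction hp using AddSubmonoid.closure_induction with
    | mem y hy =>
      obtain ⟨a, ha, b, hb, rfl⟩ := hy
      exact Submodule.subset_span ⟨a, ha, b * c,
        Submodule.subset_span ⟨b, hb, c, hc, rfl⟩, mul_assoc a b c⟩
    | zero => simpa using zero_mem (rmul A (rmul B C))
    | add y z _ _ hy hz => rw [add_mul]; exact add_mem hy hz
  · rw [rmul, Submodule.span_le]
    rintro x ⟨a, ha, q, hq, rfl⟩
    rw [mem_rmul_iff] at hq
    induction hq using AddSubmonoid.closure_induction with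
    | mem y hy =>
      obtain ⟨b, hb, c, hc, rfl⟩ := hy
      exact Submodule.subset_span ⟨a * b,
        Submodule.subset_span ⟨a, ha, b, hb, rfl⟩, c, hc, (mul_assoc a b c).symm⟩
    | zero => simpa using zero_mem (rmul (rmul A B) C)
    | add y z _ _ hy hz => rw [mul_add]; exact add_mem hy hz

lemma rprod_cons (A : Submodule Rᵐᵒᵖ R) (l : List (Submodule Rᵐᵒᵖ R)) :
    rprod (A :: l) = rmul A (rprod l) := by
  cases l with
  | nil => exact (rmul_top A).symm
  | cons B l' => rfl

lemma rmul_rprod_comm (A : Submodule Rᵐᵒᵖ R) (l : List (Submodule Rᵐᵒᵖ R)) (hl : l ≠ [])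
    (h : ∀ B ∈ l, rmul A B = rmul B A) :
    rmul A (rprod l) = rmul (rprod l) A := by
  induction l with
  | nil => exact absurd rfl hl
  | cons B l' ih =>
    cases l' with
    | nil => exact h B (by simp)
    | cons C l'' =>
      rw [rprod_cons, ← rmul_assoc, h B (by simp), rmul_assoc,
        ih (by simp) (fun D hD => h D (by simp [hD])), ← rmul_assoc]

lemma crt (A B : Submodule Rᵐᵒᵖ R) (hsup : A ⊔ B = ⊤) (hcomm : rmul A B = rmul B A) :
    rmul A B = A ⊓ B := by
  apply le_antisymm
  · exact le_inf rmul_le_left (hcomm ▸ rmul_le_left)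
  · rintro x ⟨hxA, hxB⟩
    have h1 : (1 : R) ∈ A ⊔ B := hsup ▸ trivial
    obtain ⟨a, ha, b, hb, hab⟩ := Submodule.mem_sup.mp h1
    have : x = x * a + x * b := by rw [← mul_add, hab, mul_one]
    rw [this]
    refine add_mem ?_ (Submodule.subset_span ⟨x, hxA, b, hb, rfl⟩)
    exact hcomm ▸ Submodule.subset_span ⟨x, hxB, a, ha, rfl⟩


end AuxSection

/-- Lemma 1(1): if proper right ideals `A₁, …, Aₙ` pairwise commute and form a coindependent
family, then `A₁⋯Aₙ = ⋂ᵢ Aᵢ`. -/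
theorem statement0 {R : Type u} [Ring R] [Nontrivial R] {n : ℕ}
    (A : Fin n → Submodule Rᵐᵒᵖ R)
    (hproper : ∀ i, A i ≠ ⊤)
    (hcomm : ∀ i j, rmul (A i) (A j) = rmul (A j) (A i))
    (hcoind : Coindep A) :
    rprod (List.ofFn A) = ⨅ i, A i := by
    induction n with
  | zero => exact (iInf_of_empty A).symm
  | succ n ih =>
    have htail : rprod (List.ofFn fun i : Fin n => A i.succ) = ⨅ i : Fin n, A i.succ := by
      refine ih _ (fun i => hproper i.succ) (fun i j => hcomm i.succ j.succ) (fun i => ?_)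
      rw [eq_top_iff, ← hcoind i.succ]
      refine sup_le_sup_left (le_iInf fun j => le_iInf fun hj => ?_) _
      exact iInf_le_of_le j.succ (iInf_le_of_le (fun h => hj (Fin.succ_injective n h)) le_rfl)
    have hsplit : (⨅ i : Fin (n+1), A i) = A 0 ⊓ ⨅ i : Fin n, A i.succ := by
      apply le_antisymm
      · exact le_inf (iInf_le _ 0) (le_iInf fun i => iInf_le _ i.succ)
      · refine le_iInf fun i => ?_
        refine Fin.cases inf_le_left (fun j => le_trans inf_le_right (iInf_le _ j)) i
    rw [List.ofFn_succ, rprod_cons, htail, hsplit]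
    have hsup : A 0 ⊔ (⨅ i : Fin n, A i.succ) = ⊤ := by
      rw [eq_top_iff, ← hcoind 0]
      refine sup_le_sup_left (le_iInf fun j => ?_) _
      exact iInf_le_of_le j.succ (iInf_le_of_le (Fin.succ_ne_zero j) le_rfl)
    rcases Nat.eq_zero_or_pos n with rfl | hn
    · rw [iInf_of_empty, rmul_top, inf_top_eq]
    · refine crt _ _ hsup ?_
      rw [← htail]
      refine rmul_rprod_comm _ _ (by simp [hn.ne']) fun B hB => ?_
      obtain ⟨j, rfl⟩ := List.mem_ofFn.mp hB
      exact hcomm 0 j.succ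
end

section
/- Let R be a ring, A a right ideal of R with a serial factorization A = A_1⋯A_n, and B a right ideal of R containing A. If B has a serial factorization, then B is the product of those right ideals B + A_i (i = 1, …, n) that are proper in R, and this product (of the proper factors B + A_i, taken in the order of increasing i) is a serial factorization of B. -/
open MulOpposite

universe u

namespace RIdeal
variable {R : Type u} [Ring R]

lemma smul_def (r x : R) : (op r) • x = x * r := rfl

lemma mem_rmul {A B : Submodule Rᵐᵒᵖ R} {a b : R} (ha : a ∈ A) (hb : b ∈ B) :
    a * b ∈ rmul A B :=
  Submodule.subset_span ⟨a, ha, b, hb, rfl⟩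

lemma rmul_le {A B C : Submodule Rᵐᵒᵖ R} (h : ∀ a ∈ A, ∀ b ∈ B, a * b ∈ C) :
    rmul A B ≤ C := by
  apply Submodule.span_le.2
  rintro x ⟨a, ha, b, hb, rfl⟩
  exact h a ha b hb

lemma rmul_le_left {A B : Submodule Rᵐᵒᵖ R} : rmul A B ≤ A := by
  apply rmul_le
  intro a ha b _
  simpa [smul_def] using A.smul_mem (op b) ha

lemma mem_closure_of_mem_rmul {A B : Submodule Rᵐᵒᵖ R} {x : R} (hx : x ∈ rmul A B) :
    x ∈ AddSubmonoid.closure {x : R | ∃ a ∈ A, ∃ b ∈ B, x = a * b} := by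
  let S : AddSubmonoid R := AddSubmonoid.closure {x : R | ∃ a ∈ A, ∃ b ∈ B, x = a * b}
  let T : Submodule Rᵐᵒᵖ R :=
    { carrier := S
      add_mem' := fun h1 h2 => S.add_mem h1 h2
      zero_mem' := S.zero_mem
      smul_mem' := by
        intro r y hy
        have : ∀ z ∈ S, z * r.unop ∈ S := by
          intro z hz
          induction hz using AddSubmonoid.closure_induction with
          | mem w hw =>
            obtain ⟨a, ha, b, hb, rfl⟩ := hw
            exact AddSubmonoid.subset_closure
              ⟨a, ha, b * r.unop, B.smul_mem (op r.unop) hb, mul_assoc a b r.unop⟩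
          | zero => simpa using S.zero_mem
          | add y z _ _ hy' hz' => rw [add_mul]; exact S.add_mem hy' hz'
        exact this y hy }
  have hle : rmul A B ≤ T := Submodule.span_le.2 (fun z hz => AddSubmonoid.subset_closure hz)
  exact hle hx

/-- An induction principle for membership in `rmul`. -/
lemma rmul_induction {A B : Submodule Rᵐᵒᵖ R} {P : R → Prop}
    (h0 : P 0) (hadd : ∀ x y, P x → P y → P (x + y))
    (hgen : ∀ a ∈ A, ∀ b ∈ B, P (a * b)) : ∀ x ∈ rmul A B, P x := by
  intro x hx
  have hS := mem_closure_of_mem_rmul hx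
  clear hx
  induction hS using AddSubmonoid.closure_induction with
  | mem z hz => obtain ⟨a, ha, b, hb, rfl⟩ := hz; exact hgen a ha b hb
  | zero => exact h0
  | add y z _ _ hy' hz' => exact hadd y z hy' hz'

lemma rmul_top {A : Submodule Rᵐᵒᵖ R} : rmul A ⊤ = A := by
  refine le_antisymm rmul_le_left (fun a ha => ?_)
  simpa using mem_rmul ha (Submodule.mem_top (x := (1:R)))

lemma rmul_assoc (A B C : Submodule Rᵐᵒᵖ R) :
    rmul (rmul A B) C = rmul A (rmul B C) := by
  apply le_antisymm
  · apply rmul_le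
    intro x hx c hc
    refine rmul_induction (P := fun y => y * c ∈ rmul A (rmul B C)) (by simp)
      (fun y z hy hz => by simpa [add_mul] using Submodule.add_mem _ hy hz)
      (fun a ha b hb => by
        show a * b * c ∈ _
        rw [mul_assoc]; exact mem_rmul ha (mem_rmul hb hc)) x hx
  · apply rmul_le
    intro a ha x hx
    refine rmul_induction (P := fun y => a * y ∈ rmul (rmul A B) C) (by simp)
      (fun y z hy hz => by simpa [mul_add] using Submodule.add_mem _ hy hz)
      (fun b hb c hc => by
        show a * (b * c) ∈ _
        rw [← mul_assoc]; exact mem_rmul (mem_rmul ha hb) hc) x hx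

lemma rprod_cons (X : Submodule Rᵐᵒᵖ R) (l : List (Submodule Rᵐᵒᵖ R)) :
    rprod (X :: l) = rmul X (rprod l) := by
  cases l with
  | nil => exact rmul_top.symm
  | cons Y l => rfl

end RIdeal

namespace RIdeal
variable {R : Type u} [Ring R]

/-- If `X + Y = R` then `Z ≤ X + YZ`. -/
lemma le_sup_rmul {X Y : Submodule Rᵐᵒᵖ R} (Z : Submodule Rᵐᵒᵖ R) (h : X ⊔ Y = ⊤) :
    Z ≤ X ⊔ rmul Y Z := by
  obtain ⟨x, hx, y, hy, hxy⟩ := Submodule.mem_sup.1 (h ▸ Submodule.mem_top : (1:R) ∈ X ⊔ Y)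
  intro z hz
  have : z = x * z + y * z := by rw [← add_mul, hxy, one_mul]
  rw [this]
  exact Submodule.add_mem _
    (Submodule.mem_sup_left (by simpa [smul_def] using X.smul_mem (op z) hx))
    (Submodule.mem_sup_right (mem_rmul hy hz))

lemma sup_rmul_top {X Y Z : Submodule Rᵐᵒᵖ R} (h1 : X ⊔ Y = ⊤) (h2 : X ⊔ Z = ⊤) :
    X ⊔ rmul Y Z = ⊤ := by
  have h3 : X ⊔ Z ≤ X ⊔ rmul Y Z := sup_le le_sup_left (le_sup_rmul Z h1)
  exact top_le_iff.1 (h2 ▸ h3)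

lemma sup_rprod_top {X : Submodule Rᵐᵒᵖ R} {l : List (Submodule Rᵐᵒᵖ R)}
    (h : ∀ Y ∈ l, X ⊔ Y = ⊤) : X ⊔ rprod l = ⊤ := by
  induction l with
  | nil => exact sup_top_eq X
  | cons Y l ih =>
    rw [rprod_cons]
    exact sup_rmul_top (h Y (List.mem_cons_self)) (ih fun Z hZ => h Z (List.mem_cons_of_mem Y hZ))

/-- Comaximal commuting right ideals: product equals intersection. -/
lemma rmul_eq_inf {X Y : Submodule Rᵐᵒᵖ R} (hco : X ⊔ Y = ⊤) (hcomm : rmul X Y = rmul Y X) :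
    rmul X Y = X ⊓ Y := by
  apply le_antisymm
  · exact le_inf rmul_le_left (hcomm ▸ rmul_le_left : rmul X Y ≤ Y)
  · rintro z ⟨hzX, hzY⟩
    obtain ⟨x, hx, y, hy, hxy⟩ := Submodule.mem_sup.1 (hco ▸ Submodule.mem_top : (1:R) ∈ X ⊔ Y)
    have : z = x * z + y * z := by rw [← add_mul, hxy, one_mul]
    rw [this]
    exact Submodule.add_mem _ (mem_rmul hx hzY) (hcomm ▸ mem_rmul hy hzX)

lemma comm_rprod {X : Submodule Rᵐᵒᵖ R} {l : List (Submodule Rᵐᵒᵖ R)} (hne : l ≠ [])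
    (h : ∀ Y ∈ l, rmul X Y = rmul Y X) : rmul X (rprod l) = rmul (rprod l) X := by
  induction l with
  | nil => exact absurd rfl hne
  | cons Y l ih =>
    cases l with
    | nil => exact h Y (List.mem_cons_self)
    | cons Z l' =>
      rw [rprod_cons, ← rmul_assoc, h Y (List.mem_cons_self), rmul_assoc,
        ih (by simp) (fun W hW => h W (List.mem_cons_of_mem Y hW)), ← rmul_assoc]

lemma rprod_eq_sInf {l : List (Submodule Rᵐᵒᵖ R)}
    (h : l.Pairwise (fun X Y => X ⊔ Y = ⊤ ∧ rmul X Y = rmul Y X)) :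
    rprod l = sInf {Y | Y ∈ l} := by
  induction l with
  | nil =>
    have : {Y : Submodule Rᵐᵒᵖ R | Y ∈ ([] : List (Submodule Rᵐᵒᵖ R))} = ∅ := by ext; simp
    rw [this, sInf_empty]; rfl
  | cons X l ih =>
    rw [List.pairwise_cons] at h
    obtain ⟨hX, hl⟩ := h
    have hset : {Y | Y ∈ X :: l} = insert X {Y | Y ∈ l} := by ext; simp [List.mem_cons]
    rw [rprod_cons, hset, sInf_insert, ← ih hl]
    cases l with
    | nil =>
      show rmul X ⊤ = X ⊓ (⊤ : Submodule Rᵐᵒᵖ R)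
      rw [rmul_top, inf_top_eq]
    | cons Z l' =>
      exact rmul_eq_inf (sup_rprod_top (fun Y hY => (hX Y hY).1))
        (comm_rprod (by simp) (fun Y hY => (hX Y hY).2))

end RIdeal

namespace RIdeal
variable {R : Type u} [Ring R]

lemma comparable_of_uniserial {X : Submodule Rᵐᵒᵖ R}
    (h : IsUniserialMod Rᵐᵒᵖ (R ⧸ X)) {C D : Submodule Rᵐᵒᵖ R}
    (hC : X ≤ C) (hD : X ≤ D) : C ≤ D ∨ D ≤ C := by
  have key : ∀ E : Submodule Rᵐᵒᵖ R, X ≤ E →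
      Submodule.comap X.mkQ (Submodule.map X.mkQ E) = E := by
    intro E hE
    rw [Submodule.comap_map_eq, Submodule.ker_mkQ, sup_eq_left.2 hE]
  rcases h (Submodule.map X.mkQ C) (Submodule.map X.mkQ D) with hle | hle
  · left; rw [← key C hC, ← key D hD]; exact Submodule.comap_mono hle
  · right; rw [← key C hC, ← key D hD]; exact Submodule.comap_mono hle

section Family

variable {n : ℕ} {F : Fin n → Submodule Rᵐᵒᵖ R}

lemma pair_comax (hcoind : Coindep F) {i j : Fin n} (hij : i ≠ j) : F i ⊔ F j = ⊤ := by
  have h1 : (⨅ k, ⨅ (_ : k ≠ i), F k) ≤ F j :=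
    iInf_le_of_le j (by exact iInf_le _ (Ne.symm hij))
  exact top_le_iff.1 ((hcoind i) ▸ sup_le_sup_left h1 (F i) :
    (⊤ : Submodule Rᵐᵒᵖ R) ≤ F i ⊔ F j)

lemma rprod_ofFn_eq_iInf (hco : ∀ i j, i ≠ j → F i ⊔ F j = ⊤)
    (hcm : ∀ i j, rmul (F i) (F j) = rmul (F j) (F i)) :
    rprod (List.ofFn F) = ⨅ i, F i := by
  rw [rprod_eq_sInf (List.pairwise_ofFn.2 fun i j hij => ⟨hco i j (ne_of_lt hij), hcm i j⟩)]
  have : {Y | Y ∈ List.ofFn F} = Set.range F := by ext Y; simp [List.mem_ofFn]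
  rw [this, sInf_range]

/-- The list of the `F i` for `i ≠ i₀`. -/
def others (F : Fin n → Submodule Rᵐᵒᵖ R) (i₀ : Fin n) : List (Submodule Rᵐᵒᵖ R) :=
  ((List.finRange n).filter (fun i => i ≠ i₀)).map F

lemma mem_others {i₀ : Fin n} {Y : Submodule Rᵐᵒᵖ R} :
    Y ∈ others F i₀ ↔ ∃ i, i ≠ i₀ ∧ F i = Y := by
  simp [others, List.mem_filter, List.mem_finRange]

lemma others_pairwise (hco : ∀ i j, i ≠ j → F i ⊔ F j = ⊤)
    (hcm : ∀ i j, rmul (F i) (F j) = rmul (F j) (F i)) (i₀ : Fin n) :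
    (others F i₀).Pairwise (fun X Y => X ⊔ Y = ⊤ ∧ rmul X Y = rmul Y X) := by
  apply List.pairwise_map.2
  have h1 : ((List.finRange n).filter (fun i => i ≠ i₀)).Pairwise (· ≠ ·) :=
    ((List.nodup_finRange n).filter _ : ((List.finRange n).filter _).Nodup)
  exact h1.imp (fun hij => ⟨hco _ _ hij, hcm _ _⟩)

lemma rprod_others (hco : ∀ i j, i ≠ j → F i ⊔ F j = ⊤)
    (hcm : ∀ i j, rmul (F i) (F j) = rmul (F j) (F i)) (i₀ : Fin n) :
    rprod (others F i₀) = ⨅ i, ⨅ (_ : i ≠ i₀), F i := by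
  rw [rprod_eq_sInf (others_pairwise hco hcm i₀)]
  apply le_antisymm
  · exact le_iInf fun i => le_iInf fun hi => sInf_le (mem_others.2 ⟨i, hi, rfl⟩)
  · refine le_sInf fun Y hY => ?_
    obtain ⟨i, hi, rfl⟩ := mem_others.1 hY
    exact iInf₂_le i hi

lemma inf_others_eq_iInf (i₀ : Fin n) :
    F i₀ ⊓ (⨅ i, ⨅ (_ : i ≠ i₀), F i) = ⨅ i, F i := by
  apply le_antisymm
  · refine le_iInf fun i => ?_
    by_cases hi : i = i₀
    · exact hi ▸ inf_le_left
    · exact inf_le_right.trans (iInf₂_le i hi)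
  · exact le_inf (iInf_le _ i₀) (le_iInf fun i => le_iInf fun _ => iInf_le _ i)

/-- Key lemma: a proper right ideal `X` with `R/X` uniserial containing `⨅ F i`
contains some `F i₀` and is comaximal with all other `F i`. -/
lemma exists_absorbing_index (hcoind : Coindep F)
    (hcm : ∀ i j, rmul (F i) (F j) = rmul (F j) (F i))
    {X : Submodule Rᵐᵒᵖ R} (hX : X ≠ ⊤)
    (hXuni : IsUniserialMod Rᵐᵒᵖ (R ⧸ X))
    (hAX : (⨅ i, F i) ≤ X) :
    ∃ i₀, F i₀ ≤ X ∧ ∀ i, i ≠ i₀ → X ⊔ F i = ⊤ := by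
  have hco : ∀ i j, i ≠ j → F i ⊔ F j = ⊤ := fun i j h => pair_comax hcoind h
  by_cases hall : ∀ i, X ⊔ F i = ⊤
  · exfalso
    have h1 : X ⊔ rprod (List.ofFn F) = ⊤ := by
      apply sup_rprod_top
      intro Y hY
      obtain ⟨i, rfl⟩ := (List.mem_ofFn' F Y).1 hY
      exact hall i
    rw [rprod_ofFn_eq_iInf hco hcm] at h1
    exact hX (top_le_iff.1 (h1.symm.le.trans (sup_le (le_refl X) hAX)))
  · push_neg at hall
    obtain ⟨i₀, hi₀⟩ := hall
    have hother : ∀ i, i ≠ i₀ → X ⊔ F i = ⊤ := by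
      intro i₁ hi₁ne
      by_contra hi₁
      have hsup : (X ⊔ F i₀) ⊔ (X ⊔ F i₁) = ⊤ := by
        have h1 : (⨅ k, ⨅ (_ : k ≠ i₀), F k) ≤ X ⊔ F i₁ :=
          le_trans (iInf₂_le i₁ hi₁ne) le_sup_right
        have h2 : F i₀ ⊔ (⨅ k, ⨅ (_ : k ≠ i₀), F k) ≤ (X ⊔ F i₀) ⊔ (X ⊔ F i₁) :=
          sup_le (le_trans le_sup_right le_sup_left) (le_trans h1 le_sup_right)
        exact top_le_iff.1 ((hcoind i₀) ▸ h2)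
      rcases comparable_of_uniserial hXuni (le_sup_left : X ≤ X ⊔ F i₀)
          (le_sup_left : X ≤ X ⊔ F i₁) with hle | hle
      · rw [sup_eq_right.2 hle] at hsup; exact hi₁ hsup
      · rw [sup_eq_left.2 hle] at hsup; exact hi₀ hsup
    refine ⟨i₀, ?_, hother⟩
    by_cases hsing : ∀ i, i = i₀
    · have : F i₀ ≤ ⨅ i, F i := le_iInf fun i => (hsing i).symm ▸ le_refl _
      exact this.trans hAX
    · push_neg at hsing
      obtain ⟨i₁, hi₁⟩ := hsing
      have hne : others F i₀ ≠ [] := by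
        intro h
        have : F i₁ ∈ others F i₀ := mem_others.2 ⟨i₁, hi₁, rfl⟩
        rw [h] at this; exact absurd this List.not_mem_nil
      have hXP : X ⊔ rprod (others F i₀) = ⊤ := by
        apply sup_rprod_top
        intro Y hY
        obtain ⟨i, hi, rfl⟩ := mem_others.1 hY
        exact hother i hi
      have hPcomm : rmul (F i₀) (rprod (others F i₀)) = rmul (rprod (others F i₀)) (F i₀) := by
        apply comm_rprod hne
        intro Y hY
        obtain ⟨i, _, rfl⟩ := mem_others.1 hY
        exact hcm i₀ i
      have hPco : F i₀ ⊔ rprod (others F i₀) = ⊤ := by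
        rw [rprod_others hco hcm i₀]; exact hcoind i₀
      have hPA : rmul (rprod (others F i₀)) (F i₀) ≤ X := by
        rw [← hPcomm, rmul_eq_inf hPco hPcomm, rprod_others hco hcm i₀,
          inf_others_eq_iInf i₀]
        exact hAX
      intro a ha
      obtain ⟨x, hx, p, hp, hxp⟩ := Submodule.mem_sup.1 (hXP ▸ Submodule.mem_top :
        (1:R) ∈ X ⊔ rprod (others F i₀))
      have : a = x * a + p * a := by rw [← add_mul, hxp, one_mul]
      rw [this]
      exact Submodule.add_mem _ (by simpa [smul_def] using X.smul_mem (op a) hx)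
        (hPA (mem_rmul hp ha))

end Family
end RIdeal


open scoped Classical

/-- Theorem (Tuesday)(2): if `A = A₁⋯Aₙ` is a serial factorization, `A ⊆ B` and `B` has a
serial factorization, then `B` is the product of those right ideals `B + Aᵢ` that are proper,
and this product (in order of increasing `i`) is a serial factorization of `B`. -/
theorem statement8 {R : Type u} [Ring R] [Nontrivial R] {n : ℕ}
    (A B : Submodule Rᵐᵒᵖ R) (F : Fin n → Submodule Rᵐᵒᵖ R)
    (hsf : IsSerialFact A F) (hAB : A ≤ B) (hB : HasSerialFact B) :
    B = rprod ((List.ofFn fun i => B ⊔ F i).filter fun X => X ≠ ⊤) ∧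
    IsSerialFact B
      (fun j : Fin ((List.ofFn fun i => B ⊔ F i).filter fun X => X ≠ ⊤).length =>
        ((List.ofFn fun i => B ⊔ F i).filter fun X => X ≠ ⊤).get j) := by
  classical
  open RIdeal in
  obtain ⟨hF1, hF2, hF3, hF4, hF5⟩ := hsf
  obtain ⟨m, C, hC1, hC2, hC3, hC4, hC5⟩ := hB
  have hcoF : ∀ i j, i ≠ j → F i ⊔ F j = ⊤ := fun i j h => pair_comax hF3 h
  have hcoC : ∀ i j, i ≠ j → C i ⊔ C j = ⊤ := fun i j h => pair_comax hC3 h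
  have hAinf : A = ⨅ i, F i := hF5.trans (rprod_ofFn_eq_iInf hcoF hF2)
  have hBinf : B = ⨅ j, C j := hC5.trans (rprod_ofFn_eq_iInf hcoC hC2)
  have hBleC : ∀ j, B ≤ C j := fun j => hBinf ▸ iInf_le _ j
  have hABi : (⨅ i, F i) ≤ B := hAinf ▸ hAB
  have key : ∀ j, ∃ i₀, F i₀ ≤ C j ∧ ∀ i, i ≠ i₀ → C j ⊔ F i = ⊤ :=
    fun j => exists_absorbing_index hF3 hF2 (hC1 j) (hC4 j) (hABi.trans (hBleC j))
  choose idx hidx1 hidx2 using key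
  have hinj : Function.Injective idx := by
    intro j₁ j₂ h
    by_contra hne
    have h12 : C j₁ ⊔ C j₂ = ⊤ := hcoC j₁ j₂ hne
    rcases comparable_of_uniserial (hF4 (idx j₁)) (hidx1 j₁) (h ▸ hidx1 j₂) with hle | hle
    · rw [sup_eq_right.2 hle] at h12; exact hC1 j₂ h12
    · rw [sup_eq_left.2 hle] at h12; exact hC1 j₁ h12
  have hCne : ∀ j₁ j₂, C j₁ = C j₂ → j₁ = j₂ := by
    intro j₁ j₂ heq
    by_contra hne
    have := hcoC j₁ j₂ hne
    rw [heq, sup_idem] at this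
    exact hC1 j₂ this
  -- each C j equals B ⊔ F (idx j)
  have hCeq : ∀ j, C j = B ⊔ F (idx j) := by
    intro j
    refine le_antisymm ?_ (sup_le (hBleC j) (hidx1 j))
    by_cases hsing : ∀ k, k = j
    · have hCB : C j ≤ B := hBinf ▸ le_iInf fun k => by rw [hsing k]
      exact hCB.trans le_sup_left
    · push_neg at hsing
      obtain ⟨k₁, hk₁⟩ := hsing
      have hXk : ∀ k, k ≠ j → (B ⊔ F (idx j)) ⊔ C k = ⊤ := by
        intro k hk
        have h1 : C k ⊔ F (idx j) = ⊤ := hidx2 k (idx j) (fun he => hk (hinj he).symm)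
        refine top_le_iff.1 (h1 ▸ sup_le le_sup_right
          ((le_sup_right : F (idx j) ≤ B ⊔ F (idx j)).trans le_sup_left))
      have hne : others C j ≠ [] := by
        intro h
        have : C k₁ ∈ others C j := mem_others.2 ⟨k₁, hk₁, rfl⟩
        rw [h] at this; exact absurd this List.not_mem_nil
      have hXP : (B ⊔ F (idx j)) ⊔ rprod (others C j) = ⊤ := by
        apply sup_rprod_top
        intro Y hY
        obtain ⟨k, hk, rfl⟩ := mem_others.1 hY
        exact hXk k hk
      have hPcomm : rmul (C j) (rprod (others C j)) = rmul (rprod (others C j)) (C j) := by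
        apply comm_rprod hne
        intro Y hY
        obtain ⟨k, _, rfl⟩ := mem_others.1 hY
        exact hC2 j k
      have hPco : C j ⊔ rprod (others C j) = ⊤ := by
        rw [rprod_others hcoC hC2 j]; exact hC3 j
      have hPB : rmul (rprod (others C j)) (C j) ≤ B := by
        rw [← hPcomm, rmul_eq_inf hPco hPcomm, rprod_others hcoC hC2 j,
          inf_others_eq_iInf j, ← hBinf]
      intro b hb
      obtain ⟨x, hx, d, hd, hxd⟩ := Submodule.mem_sup.1 (hXP ▸ Submodule.mem_top :
        (1:R) ∈ (B ⊔ F (idx j)) ⊔ rprod (others C j))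
      have hbeq : b = x * b + d * b := by rw [← add_mul, hxd, one_mul]
      rw [hbeq]
      exact Submodule.add_mem _
        (by simpa [smul_def] using (B ⊔ F (idx j)).smul_mem (op b) hx)
        (Submodule.mem_sup_left (hPB (mem_rmul hd hb)))
  -- indices not hit give improper sums
  have hnotin : ∀ i, (∀ j, idx j ≠ i) → B ⊔ F i = ⊤ := by
    intro i hi
    have h1 : F i ⊔ rprod (List.ofFn C) = ⊤ := by
      apply sup_rprod_top
      intro Y hY
      obtain ⟨j, rfl⟩ := Set.mem_range.1 ((List.mem_ofFn' C Y).1 hY)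
      rw [sup_comm]
      exact hidx2 j i (fun he => hi j he.symm)
    rw [← hC5, sup_comm] at h1
    exact h1
  have hproper : ∀ i, B ⊔ F i ≠ ⊤ → ∃ j, idx j = i ∧ B ⊔ F i = C j := by
    intro i hi
    by_cases h : ∃ j, idx j = i
    · obtain ⟨j, rfl⟩ := h
      exact ⟨j, rfl, (hCeq j).symm⟩
    · push_neg at h
      exact absurd (hnotin i h) hi
  set L := (List.ofFn fun i => B ⊔ F i).filter (fun X => X ≠ ⊤) with hL
  have hmemL : ∀ X, X ∈ L ↔ ∃ j, X = C j := by
    intro X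
    constructor
    · intro hX
      have hXne : X ≠ ⊤ := by simpa using List.of_mem_filter hX
      obtain ⟨i, rfl⟩ := Set.mem_range.1
        ((List.mem_ofFn' _ X).1 (List.mem_of_mem_filter hX))
      obtain ⟨j, _, hj2⟩ := hproper i hXne
      exact ⟨j, hj2⟩
    · rintro ⟨j, rfl⟩
      have h1 : C j ∈ List.ofFn fun i => B ⊔ F i :=
        (List.mem_ofFn' _ _).2 ⟨idx j, (hCeq j).symm⟩
      exact List.mem_filter.2 ⟨h1, by simpa using hC1 j⟩
  have hLne : ∀ X ∈ L, X ≠ ⊤ := fun X hX => by simpa using List.of_mem_filter hX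
  have hLpair : L.Pairwise (fun X Y => X ⊔ Y = ⊤ ∧ rmul X Y = rmul Y X) := by
    have h0 : (List.ofFn fun i => B ⊔ F i).Pairwise
        (fun X Y => X ≠ ⊤ → Y ≠ ⊤ → (X ⊔ Y = ⊤ ∧ rmul X Y = rmul Y X)) := by
      refine List.pairwise_ofFn.2 fun i₁ i₂ hlt => fun hne1 hne2 => ?_
      obtain ⟨j₁, hj₁, he₁⟩ := hproper i₁ hne1
      obtain ⟨j₂, hj₂, he₂⟩ := hproper i₂ hne2
      have hjne : j₁ ≠ j₂ := by
        intro h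
        rw [h, hj₂] at hj₁
        exact absurd hj₁ (Ne.symm (ne_of_lt hlt))
      rw [he₁, he₂]
      exact ⟨hcoC j₁ j₂ hjne, hC2 j₁ j₂⟩
    exact (h0.filter _).imp_of_mem (fun {X Y} hX hY h => h (hLne X hX) (hLne Y hY))
  have hLnodup : L.Nodup := by
    have h0 : (List.ofFn fun i => B ⊔ F i).Pairwise
        (fun X Y => X ≠ ⊤ → Y ≠ ⊤ → X ≠ Y) := by
      refine List.pairwise_ofFn.2 fun i₁ i₂ hlt => fun hne1 hne2 => ?_
      obtain ⟨j₁, hj₁, he₁⟩ := hproper i₁ hne1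
      obtain ⟨j₂, hj₂, he₂⟩ := hproper i₂ hne2
      have hjne : j₁ ≠ j₂ := by
        intro h
        rw [h, hj₂] at hj₁
        exact absurd hj₁ (Ne.symm (ne_of_lt hlt))
      rw [he₁, he₂]
      exact fun h => hjne (hCne j₁ j₂ h)
    exact (h0.filter _).imp_of_mem (fun {X Y} hX hY h => h (hLne X hX) (hLne Y hY))
  have hgoal1 : B = rprod L := by
    rw [rprod_eq_sInf hLpair]
    have hset : {Y | Y ∈ L} = Set.range C := by
      ext Y
      simp only [Set.mem_setOf_eq, hmemL, Set.mem_range]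
      exact exists_congr fun j => eq_comm
    rw [hset, sInf_range, ← hBinf]
  have hgetC : ∀ p : Fin L.length, ∃ j, L.get p = C j :=
    fun p => (hmemL _).1 (L.get_mem p)
  refine ⟨hgoal1, ?_, ?_, ?_, ?_, ?_⟩
  · intro p
    show L.get p ≠ ⊤
    obtain ⟨j, hj⟩ := hgetC p
    rw [hj]
    exact hC1 j
  · intro p q
    show rmul (L.get p) (L.get q) = rmul (L.get q) (L.get p)
    obtain ⟨j, hj⟩ := hgetC p
    obtain ⟨k, hk⟩ := hgetC q
    rw [hj, hk]
    exact hC2 j k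
  · intro p
    show L.get p ⊔ (⨅ q, ⨅ (_ : q ≠ p), L.get q) = ⊤
    obtain ⟨j, hj⟩ := hgetC p
    have hinf : (⨅ k, ⨅ (_ : k ≠ j), C k) ≤ ⨅ q, ⨅ (_ : q ≠ p), L.get q := by
      refine le_iInf fun q => le_iInf fun hq => ?_
      obtain ⟨k, hk⟩ := hgetC q
      have hkj : k ≠ j := by
        intro h
        rw [h, ← hj] at hk
        exact hq (List.nodup_iff_injective_get.1 hLnodup hk)
      rw [hk]
      exact iInf_le_of_le k (by exact iInf_le _ hkj)
    have h2 : C j ⊔ (⨅ k, ⨅ (_ : k ≠ j), C k) ≤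
        L.get p ⊔ (⨅ q, ⨅ (_ : q ≠ p), L.get q) :=
      sup_le_sup (le_of_eq hj.symm) hinf
    exact top_le_iff.1 ((hC3 j) ▸ h2)
  · intro p
    show IsUniserialMod Rᵐᵒᵖ (R ⧸ L.get p)
    obtain ⟨j, hj⟩ := hgetC p
    rw [hj]
    exact hC4 j
  · rw [List.ofFn_get]
    exact hgoal1
end
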